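/- Let X be a closed acausal subset of the pseudo-Euclidean space ℝ_{(l,p)} and let a ∈ X. Then N(a) − a ⊂ N_aX, where N_aX := {w ∈ ℝ^n : ⟪w,v⟫ ≤ 0 for all v ∈ C_aX} is the pseudo-normal cone of X at a and C_aX is the tangent cone of X at a. -/

import Mathlib

open Filter Topology Set

noncomputable section

/-- The pseudo-Euclidean space `ℝ_{(l,p)}`: `ℝ^(l+p)` with the Euclidean topology. -/
abbrev PE (l p : ℕ) := EuclideanSpace ℝ (Fin (l + p))

/-- The quadratic form `Q(x) = ‖x‖_l² − ‖x‖_p²`. -/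
def Q (l p : ℕ) (x : PE l p) : ℝ :=
  ∑ i : Fin (l + p), if (i : ℕ) < l then (x i) ^ 2 else -((x i) ^ 2)

/-- The pseudo-scalar product `⟪x,y⟫ = Σ_{i<l} x_i y_i − Σ_{i≥l} x_i y_i`. -/
def pseudoInner (l p : ℕ) (x y : PE l p) : ℝ :=
  ∑ i : Fin (l + p), if (i : ℕ) < l then x i * y i else -(x i * y i)

/-- `‖x‖_l`: the Euclidean norm of the first `l` coordinates. -/
def normL (l p : ℕ) (x : PE l p) : ℝ :=
  Real.sqrt (∑ i : Fin (l + p), if (i : ℕ) < l then (x i) ^ 2 else 0)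

/-- `‖x‖_p`: the Euclidean norm of the last `p` coordinates. -/
def normP (l p : ℕ) (x : PE l p) : ℝ :=
  Real.sqrt (∑ i : Fin (l + p), if (i : ℕ) < l then 0 else (x i) ^ 2)

/-- `X` is acausal: `Q(x−y) > 0` for all distinct `x, y ∈ X`. -/
def Acausal (l p : ℕ) (X : Set (PE l p)) : Prop :=
  ∀ x ∈ X, ∀ y ∈ X, x ≠ y → 0 < Q l p (x - y)

/-- `X` is `L`-pseudo-Lipschitz: `L‖x−y‖_l ≥ ‖x−y‖_p` for all `x, y ∈ X`. -/
def PseudoLipschitz (l p : ℕ) (L : ℝ) (X : Set (PE l p)) : Prop :=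
  ∀ x ∈ X, ∀ y ∈ X, normP l p (x - y) ≤ L * normL l p (x - y)

/-- The squared-distance function `ρ(a,X) = inf {Q(x−a) : x ∈ X}`. -/
def rho (l p : ℕ) (X : Set (PE l p)) (a : PE l p) : ℝ :=
  sInf ((fun x => Q l p (x - a)) '' X)

/-- The set of closest points `m(a) = {x ∈ X : Q(x−a) = ρ(a,X)}`, via its equivalent
description `m(a) = {x ∈ X : ∀ b ∈ X, Q(x−a) ≤ Q(b−a)}`. -/
def mm (l p : ℕ) (X : Set (PE l p)) (a : PE l p) : Set (PE l p) :=
  {x ∈ X | ∀ b ∈ X, Q l p (x - a) ≤ Q l p (b - a)}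

/-- The medial axis `M_X`: points with at least two closest points in `X`. -/
def medialAxis (l p : ℕ) (X : Set (PE l p)) : Set (PE l p) :=
  {a | (mm l p X a).Nontrivial}

/-- The vacant axis `W_X`: points with no closest point in `X`. -/
def vacantAxis (l p : ℕ) (X : Set (PE l p)) : Set (PE l p) :=
  {a | mm l p X a = ∅}

/-- The normal set `N(a) = {x : a ∈ m(x)}`. -/
def NN (l p : ℕ) (X : Set (PE l p)) (a : PE l p) : Set (PE l p) :=
  {x | a ∈ mm l p X x}

/-- The strict normal set `N'(a) = {x : m(x) = {a}}`. -/
def NN' (l p : ℕ) (X : Set (PE l p)) (a : PE l p) : Set (PE l p) :=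
  {x | mm l p X x = {a}}

/-- The tangent cone `C_aX`: vectors `v` such that there are sequences `X ∋ b_ν → a`
and reals `t_ν ≥ 0` with `t_ν (b_ν − a) → v`. -/
def tangentCone' (l p : ℕ) (X : Set (PE l p)) (a : PE l p) : Set (PE l p) :=
  {v | ∃ (b : ℕ → PE l p) (t : ℕ → ℝ), (∀ ν, b ν ∈ X) ∧ (∀ ν, 0 ≤ t ν) ∧
    Tendsto b atTop (𝓝 a) ∧ Tendsto (fun ν => t ν • (b ν - a)) atTop (𝓝 v)}

lemma Q_add' (l p : ℕ) (u z : PE l p) :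
    Q l p (u + z) = Q l p u + 2 * pseudoInner l p u z + Q l p z := by
  simp only [Q, pseudoInner, Finset.mul_sum, ← Finset.sum_add_distrib]
  refine Finset.sum_congr rfl fun i _ => ?_
  have h : (u + z) i = u i + z i := rfl
  rw [h]
  split <;> ring

lemma pseudoInner_smul_left' (l p : ℕ) (c : ℝ) (u z : PE l p) :
    pseudoInner l p (c • u) z = c * pseudoInner l p u z := by
  simp only [pseudoInner, Finset.mul_sum]
  refine Finset.sum_congr rfl fun i _ => ?_
  have h : (c • u) i = c * u i := rfl
  rw [h]
  split <;> ring

lemma pseudoInner_comm' (l p : ℕ) (u z : PE l p) :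
    pseudoInner l p u z = pseudoInner l p z u := by
  refine Finset.sum_congr rfl fun i _ => ?_
  split <;> ring

lemma pseudoInner_neg_right' (l p : ℕ) (u z : PE l p) :
    pseudoInner l p u (-z) = -pseudoInner l p u z := by
  simp only [pseudoInner, ← Finset.sum_neg_distrib]
  refine Finset.sum_congr rfl fun i _ => ?_
  have h : (-z) i = -(z i) := rfl
  rw [h]
  split <;> ring

lemma Q_eq_pseudoInner_self (l p : ℕ) (u : PE l p) :
    Q l p u = pseudoInner l p u u := by
  refine Finset.sum_congr rfl fun i _ => ?_
  split <;> ring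

lemma pseudoInner_zero_right' (l p : ℕ) (u : PE l p) :
    pseudoInner l p u 0 = 0 := by
  simp [pseudoInner]

lemma pseudoInner_continuous' (l p : ℕ) :
    Continuous (fun q : PE l p × PE l p => pseudoInner l p q.1 q.2) := by
  unfold pseudoInner
  apply continuous_finset_sum
  intro i _
  by_cases h : (i : ℕ) < l
  · simp only [if_pos h]
    exact ((PiLp.continuous_apply 2 _ i).comp continuous_fst).mul
      ((PiLp.continuous_apply 2 _ i).comp continuous_snd)
  · simp only [if_neg h]
    exact (((PiLp.continuous_apply 2 _ i).comp continuous_fst).mul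
      ((PiLp.continuous_apply 2 _ i).comp continuous_snd)).neg

set_option maxHeartbeats 1000000 in
/-- For closed acausal `X` and `a ∈ X`, `N(a) − a` is contained in the
pseudo-normal cone `N_aX = {w : ⟪w,v⟫ ≤ 0 for all v ∈ C_aX}`. -/
theorem normalSet_sub_subset_pseudoNormalCone (l p : ℕ) (hl : 1 ≤ l)
    (X : Set (PE l p)) (hX : IsClosed X) (hac : Acausal l p X)
    (a : PE l p) (ha : a ∈ X) :
    (fun x => x - a) '' NN l p X a ⊆
      {w | ∀ v ∈ tangentCone' l p X a, pseudoInner l p w v ≤ 0} := by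
  rintro w ⟨x, hx, rfl⟩ v ⟨b, t, hbX, ht, hba, htv⟩
  have H : ∀ c ∈ X, Q l p (a - x) ≤ Q l p (c - x) := hx.2
  -- pointwise inequality
  have key : ∀ ν, 2 * pseudoInner l p (t ν • (b ν - a)) (x - a) ≤
      pseudoInner l p (t ν • (b ν - a)) (b ν - a) := by
    intro ν
    have h1 := H (b ν) (hbX ν)
    have h2 : b ν - x = (b ν - a) + (a - x) := (sub_add_sub_cancel _ _ _).symm
    rw [h2, Q_add' l p (b ν - a) (a - x)] at h1
    have h3 : 2 * pseudoInner l p (b ν - a) (x - a) ≤ Q l p (b ν - a) := by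
      have h4 : pseudoInner l p (b ν - a) (a - x) =
          -pseudoInner l p (b ν - a) (x - a) := by
        rw [← pseudoInner_neg_right', neg_sub]
      nlinarith [h1, h4]
    have h5 := mul_le_mul_of_nonneg_left h3 (ht ν)
    calc 2 * pseudoInner l p (t ν • (b ν - a)) (x - a)
        = t ν * (2 * pseudoInner l p (b ν - a) (x - a)) := by
          rw [pseudoInner_smul_left']; ring
      _ ≤ t ν * Q l p (b ν - a) := h5
      _ = pseudoInner l p (t ν • (b ν - a)) (b ν - a) := by
          rw [pseudoInner_smul_left', Q_eq_pseudoInner_self]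
  -- limits
  have hL : Tendsto (fun ν => 2 * pseudoInner l p (t ν • (b ν - a)) (x - a))
      atTop (𝓝 (2 * pseudoInner l p v (x - a))) := by
    have : Tendsto (fun ν => (t ν • (b ν - a), x - a)) atTop (𝓝 (v, x - a)) :=
      htv.prodMk_nhds tendsto_const_nhds
    exact (tendsto_const_nhds.mul (((pseudoInner_continuous' l p).tendsto _).comp this))
  have hR : Tendsto (fun ν => pseudoInner l p (t ν • (b ν - a)) (b ν - a))
      atTop (𝓝 0) := by
    have hsub : Tendsto (fun ν => b ν - a) atTop (𝓝 0) := by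
      have := hba.sub (tendsto_const_nhds (x := a))
      simpa using this
    have : Tendsto (fun ν => (t ν • (b ν - a), b ν - a)) atTop (𝓝 (v, 0)) :=
      htv.prodMk_nhds hsub
    have h0 := ((pseudoInner_continuous' l p).tendsto (v, (0 : PE l p))).comp this
    simpa [pseudoInner_zero_right', Function.comp_def] using h0
  have hle : 2 * pseudoInner l p v (x - a) ≤ 0 := le_of_tendsto_of_tendsto' hL hR key
  have : pseudoInner l p v (x - a) ≤ 0 := by linarith
  rw [pseudoInner_comm']
  exact this
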